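/- arXiv:2508.14516 — 5 statements merged into one kernel-verified Lean document; each statement's English description precedes it below -/
import Mathlib

section
/- Let g, h : 2^E → ℝ≥0 be monotone with curvature at most c ∈ (0,1] and generic submodularity ratio at least γ ∈ (0,1]. Then there exists an ordering π = (e_1, …, e_n) of E such that for every k ∈ {1, …, n} and every S ⊆ E with |S| = k, (1/γ)·(1 + c·e^c/(e^c − 1))·f(S_k) ≥ f(S). -/
namespace IncDec

open Finset

variable {α : Type*} [Fintype α] [DecidableEq α]

/-- Marginal gain `F(x | S) = F(S ∪ {x}) - F(S)`. -/
def marg (F : Finset α → ℝ) (x : α) (S : Finset α) : ℝ := F (insert x S) - F S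

/-- Marginal gain of a set: `F(T | S) = F(T ∪ S) - F(S)`. -/
def margSet (F : Finset α → ℝ) (T S : Finset α) : ℝ := F (T ∪ S) - F S

/-- Monotone set function. -/
def Mono (F : Finset α → ℝ) : Prop := ∀ ⦃S T : Finset α⦄, S ⊆ T → F S ≤ F T

/-- Nonnegative set function. -/
def Nonneg (F : Finset α → ℝ) : Prop := ∀ S : Finset α, 0 ≤ F S

/-- The combined objective `f(S) = h(S) + g(E \ S)`. -/
def fObj (g h : Finset α → ℝ) (S : Finset α) : ℝ := h S + g Sᶜ

/-- `F` has generic submodularity ratio at least `γ`. -/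
def GenSubRatioGE (F : Finset α → ℝ) (γ : ℝ) : Prop :=
  ∀ A B : Finset α, ∀ e : α, marg F e A ≥ γ * marg F e (A ∪ B)

/-- `F` has curvature at most `c`. -/
def CurvatureLE (F : Finset α → ℝ) (c : ℝ) : Prop :=
  ∀ A B : Finset α, ∀ e : α, e ∉ B → marg F e (A ∪ B) ≥ (1 - c) * marg F e A

/-- Submodular set function. -/
def Submodular (F : Finset α → ℝ) : Prop :=
  ∀ ⦃S T : Finset α⦄, S ⊆ T → ∀ e : α, e ∉ T → marg F e T ≤ marg F e S

/-- Modular set function. -/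
def Modular (F : Finset α → ℝ) : Prop := ∀ S : Finset α, F S = ∑ e ∈ S, F {e}

/-- Gross substitute set function. -/
def GrossSubstitute (F : Finset α → ℝ) : Prop :=
  Submodular F ∧
    ∀ A B : Finset α, Disjoint A B → 2 ≤ B.card → ∀ b ∈ B,
      ∃ b' ∈ B.erase b,
        marg F b A + margSet F (B.erase b) A ≤ marg F b' A + margSet F (B.erase b') A

/-- The set of ratios appearing in the definition of the curvature. -/
def curvRatioSet (F : Finset α → ℝ) : Set ℝ :=
  {r | ∃ A B : Finset α, ∃ e : α, e ∉ B ∧ 0 < marg F e A ∧ r = marg F e (A ∪ B) / marg F e A}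

/-- `F` has curvature exactly `c` (with `min ∅ := 1`, i.e. `c = 0` if the ratio set is empty). -/
def CurvatureEq (F : Finset α → ℝ) (c : ℝ) : Prop :=
  (¬ (curvRatioSet F).Nonempty ∧ c = 0) ∨ IsLeast (curvRatioSet F) (1 - c)

/-- The set of ratios appearing in the definition of the generic submodularity ratio. -/
def gsRatioSet (F : Finset α → ℝ) : Set ℝ :=
  {r | ∃ A B : Finset α, ∃ e : α, 0 < marg F e (A ∪ B) ∧ r = marg F e A / marg F e (A ∪ B)}

/-- `F` has generic submodularity ratio exactly `γ` (with `min ∅ := 1`). -/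
def GenSubRatioEq (F : Finset α → ℝ) (γ : ℝ) : Prop :=
  (¬ (gsRatioSet F).Nonempty ∧ γ = 1) ∨ IsLeast (gsRatioSet F) γ

/-- The singleton-based ratio set `{F(e | E \ {e}) / F({e}) : e ∈ E, F({e}) > 0}`. -/
def curvSingletonSet (F : Finset α → ℝ) : Set ℝ :=
  {r | ∃ e : α, 0 < F {e} ∧ r = marg F e ({e}ᶜ) / F {e}}

/-- A run of the double-greedy algorithm for `g` and `h`: distinct elements `elt 0, …,
`elt (n-1)` enumerating `E` (`elt i` is the element `e*_{i+1}` of the paper), together with the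
sets `H i`, `G i` (for `0 ≤ i ≤ n`), each new element maximizing the larger marginal gain and
being added to the side realizing it. -/
structure DGRun (α : Type*) [Fintype α] [DecidableEq α] (g h : Finset α → ℝ) where
  elt : ℕ → α
  H : ℕ → Finset α
  G : ℕ → Finset α
  H0 : H 0 = ∅
  G0 : G 0 = ∅
  mem : ∀ i < Fintype.card α, elt i ∉ H i ∪ G i
  distinct : ∀ i < Fintype.card α, ∀ j < Fintype.card α, elt i = elt j → i = j
  enum : ∀ x : α, ∃ i < Fintype.card α, elt i = x
  greedy : ∀ i < Fintype.card α, ∀ x : α, x ∉ H i ∪ G i →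
      max (marg g x (G i)) (marg h x (H i)) ≤ max (marg g (elt i) (G i)) (marg h (elt i) (H i))
  step : ∀ i < Fintype.card α,
      (H (i + 1) = insert (elt i) (H i) ∧ G (i + 1) = G i ∧
        marg g (elt i) (G i) ≤ marg h (elt i) (H i)) ∨
      (G (i + 1) = insert (elt i) (G i) ∧ H (i + 1) = H i ∧
        marg h (elt i) (H i) ≤ marg g (elt i) (G i))

/-- `phi R i` is the increment `φ_{i+1}` of the double-greedy run `R`. -/
def phi {g h : Finset α → ℝ} (R : DGRun α g h) (i : ℕ) : ℝ :=
  max (marg g (R.elt i) (R.G i)) (marg h (R.elt i) (R.H i))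

set_option linter.unusedSectionVars false

/-! ### basic marginal lemmas -/

lemma marg_nonneg {F : Finset α → ℝ} (hF : Mono F) (x : α) (S : Finset α) :
    0 ≤ marg F x S := sub_nonneg.2 (hF (Finset.subset_insert _ _))

lemma genratio_le {F : Finset α → ℝ} {γ : ℝ} (hγ : GenSubRatioGE F γ)
    {A Y : Finset α} (hsub : A ⊆ Y) (e : α) : γ * marg F e Y ≤ marg F e A := by
  have := hγ A Y e
  rwa [Finset.union_eq_right.mpr hsub] at this

lemma curv_le {F : Finset α → ℝ} {c : ℝ} (hc : CurvatureLE F c)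
    {A Y : Finset α} (hsub : A ⊆ Y) {e : α} (he : e ∉ Y) :
    (1 - c) * marg F e A ≤ marg F e Y := by
  have := hc A Y e he
  rwa [Finset.union_eq_right.mpr hsub] at this

/-! ### telescope lemmas -/

lemma tele_up (F : Finset α → ℝ) (b : α → ℝ) (D : Finset α) :
    ∀ X : Finset α, (∀ a ∈ D, ∀ Y : Finset α, X ⊆ Y → marg F a Y ≤ b a) →
      F (X ∪ D) ≤ F X + ∑ a ∈ D, b a := by
  classical
  induction D using Finset.induction_on with
  | empty => intro X _; simp
  | @insert a D ha IH =>
      intro X hb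
      have h1 : X ∪ insert a D = insert a X ∪ D := by
        ext x; simp [Finset.mem_insert, Finset.mem_union]
      have h2 : F (insert a X ∪ D) ≤ F (insert a X) + ∑ x ∈ D, b x := by
        refine IH (insert a X) (fun a' ha' Y hY => hb a' (Finset.mem_insert_of_mem ha') Y
          (le_trans (Finset.subset_insert _ _) hY))
      have h3 : marg F a X ≤ b a := hb a (Finset.mem_insert_self _ _) X le_rfl
      rw [h1, Finset.sum_insert ha]
      have : F (insert a X) ≤ F X + b a := by
        have := h3; unfold marg at this; linarith
      linarith

lemma tele_pair (F : Finset α → ℝ) (c : ℝ) (hF : CurvatureLE F c) (D : Finset α) :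
    ∀ X X' : Finset α, X ⊆ X' → (∀ a ∈ D, a ∉ X') →
      (1 - c) * (F (X ∪ D) - F X) ≤ F (X' ∪ D) - F X' := by
  classical
  induction D using Finset.induction_on with
  | empty => intro X X' _ _; simp
  | @insert a D ha IH =>
      intro X X' hXX' hD
      have e1 : X ∪ insert a D = insert a X ∪ D := by
        ext x; simp [Finset.mem_insert, Finset.mem_union]
      have e2 : X' ∪ insert a D = insert a X' ∪ D := by
        ext x; simp [Finset.mem_insert, Finset.mem_union]
      have hIH : (1 - c) * (F (insert a X ∪ D) - F (insert a X)) ≤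
          F (insert a X' ∪ D) - F (insert a X') := by
        refine IH (insert a X) (insert a X') (Finset.insert_subset_insert _ hXX')
          (fun a' ha' => ?_)
        have hne : a' ≠ a := fun hq => ha (hq ▸ ha')
        have := hD a' (Finset.mem_insert_of_mem ha')
        simp [Finset.mem_insert, hne, this]
      have hcu : (1 - c) * marg F a X ≤ marg F a X' :=
        curv_le hF hXX' (hD a (Finset.mem_insert_self _ _))
      unfold marg at hcu
      rw [e1, e2]
      nlinarith [hIH, hcu]

/-! ### analysis lemmas -/

lemma exp_sub_one_pos {c : ℝ} (hc0 : 0 < c) : 0 < Real.exp c - 1 := by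
  have := Real.add_one_lt_exp (ne_of_gt hc0)
  linarith

lemma one_le_CC {c : ℝ} (hc0 : 0 < c) (hc1 : c ≤ 1) :
    1 ≤ c * Real.exp c / (Real.exp c - 1) := by
  have he := exp_sub_one_pos hc0
  rw [le_div_iff₀ he]
  have h1 : (-c) + 1 ≤ Real.exp (-c) := Real.add_one_le_exp (-c)
  have h2 : Real.exp (-c) * Real.exp c = 1 := by
    rw [← Real.exp_add]; simp
  nlinarith [Real.exp_pos c]

lemma key_exp {c γ : ℝ} (k : ℕ) (hc0 : 0 < c) (hc1 : c ≤ 1) (hγ0 : 0 < γ) (hγ1 : γ ≤ 1)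
    (hk : 1 ≤ k) :
    γ * c ≤ c * Real.exp c / (Real.exp c - 1) * (1 - (1 - γ * c / k) ^ k) := by
  have he := exp_sub_one_pos hc0
  have hkR : (1:ℝ) ≤ (k:ℝ) := by exact_mod_cast hk
  have hkpos : (0:ℝ) < k := by linarith
  have hγc : 0 < γ * c := mul_pos hγ0 hc0
  have hγc1 : γ * c ≤ 1 := by nlinarith
  -- q ≤ exp (-(γc/k))
  have hq : (1 - γ * c / k) ≤ Real.exp (-(γ * c / k)) := by
    have := Real.add_one_le_exp (-(γ * c / k)); linarith
  have hq0 : 0 ≤ 1 - γ * c / k := by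
    have : γ * c / k ≤ 1 := by
      rw [div_le_one hkpos]; linarith
    linarith
  have hpow : (1 - γ * c / k) ^ k ≤ Real.exp (-(γ * c)) := by
    calc (1 - γ * c / k) ^ k ≤ (Real.exp (-(γ * c / k))) ^ k :=
          pow_le_pow_left₀ hq0 hq k
      _ = Real.exp (-(γ * c)) := by
          rw [← Real.exp_nat_mul]
          congr 1
          field_simp
  -- convexity: exp((1-γ)c) ≤ (1-γ) exp c + γ
  have hconv : Real.exp ((1 - γ) * c) ≤ (1 - γ) * Real.exp c + γ := by
    have := convexOn_exp.2 (Set.mem_univ c) (Set.mem_univ 0)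
      (by linarith : (0:ℝ) ≤ 1 - γ) (le_of_lt hγ0) (by ring)
    simpa [smul_eq_mul] using this
  have hmul : Real.exp (-(γ * c)) * Real.exp c = Real.exp ((1 - γ) * c) := by
    rw [← Real.exp_add]; ring_nf
  rw [div_mul_eq_mul_div, le_div_iff₀ he]
  have hkey : Real.exp c * (1 - (1 - γ * c / k) ^ k) ≥ γ * (Real.exp c - 1) := by
    have h1 : Real.exp c * (1 - (1 - γ * c / k) ^ k) ≥
        Real.exp c * (1 - Real.exp (-(γ * c))) := by
      have hep := Real.exp_pos c
      nlinarith
    have h2 : Real.exp c * (1 - Real.exp (-(γ * c))) = Real.exp c - Real.exp ((1 - γ) * c) := by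
      rw [mul_sub, mul_one, mul_comm, hmul]
    nlinarith
  nlinarith



/-! ### double-greedy run lemmas -/

section RunLemmas

variable {g h : Finset α → ℝ} (R : DGRun α g h)

/-- `HS R j` : step `j` is an H-step. -/
def HS (j : ℕ) : Prop := R.elt j ∈ R.H (j + 1)

instance : DecidablePred (HS R) := fun _ => Finset.decidableMem _ _

lemma hs_step {j : ℕ} (hj : j < Fintype.card α) (hhs : HS R j) :
    R.H (j + 1) = insert (R.elt j) (R.H j) ∧ R.G (j + 1) = R.G j ∧
      marg g (R.elt j) (R.G j) ≤ marg h (R.elt j) (R.H j) := by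
  rcases R.step j hj with h1 | h2
  · exact h1
  · exfalso
    have := R.mem j hj
    rw [HS, h2.2.1] at hhs
    exact this (Finset.mem_union_left _ hhs)

lemma gs_step {j : ℕ} (hj : j < Fintype.card α) (hhs : ¬ HS R j) :
    R.G (j + 1) = insert (R.elt j) (R.G j) ∧ R.H (j + 1) = R.H j ∧
      marg h (R.elt j) (R.H j) ≤ marg g (R.elt j) (R.G j) := by
  rcases R.step j hj with h1 | h2
  · exact absurd (show HS R j by rw [HS, h1.1]; exact Finset.mem_insert_self _ _) hhs
  · exact h2

lemma phi_nonneg (hh : Mono h) (j : ℕ) : 0 ≤ phi R j :=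
  le_trans (marg_nonneg hh _ _) (le_max_right _ _)

lemma phi_eq_of_hs {j : ℕ} (hj : j < Fintype.card α) (hhs : HS R j) :
    phi R j = marg h (R.elt j) (R.H j) := max_eq_right (hs_step R hj hhs).2.2

lemma phi_eq_of_gs {j : ℕ} (hj : j < Fintype.card α) (hhs : ¬ HS R j) :
    phi R j = marg g (R.elt j) (R.G j) := max_eq_left (gs_step R hj hhs).2.2

lemma H_succ_subset {j : ℕ} (hj : j < Fintype.card α) : R.H j ⊆ R.H (j + 1) := by
  by_cases hhs : HS R j
  · rw [(hs_step R hj hhs).1]; exact Finset.subset_insert _ _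
  · rw [(gs_step R hj hhs).2.1]

lemma G_succ_subset {j : ℕ} (hj : j < Fintype.card α) : R.G j ⊆ R.G (j + 1) := by
  by_cases hhs : HS R j
  · rw [(hs_step R hj hhs).2.1]
  · rw [(gs_step R hj hhs).1]; exact Finset.subset_insert _ _

lemma H_mono : ∀ {i j : ℕ}, i ≤ j → j ≤ Fintype.card α → R.H i ⊆ R.H j := by
  intro i j hij
  induction j, hij using Nat.le_induction with
  | base => intro _; exact Finset.Subset.refl _
  | succ m hm IH =>
      intro hsm
      exact (IH (by omega)).trans (H_succ_subset R (by omega))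

lemma G_mono : ∀ {i j : ℕ}, i ≤ j → j ≤ Fintype.card α → R.G i ⊆ R.G j := by
  intro i j hij
  induction j, hij using Nat.le_induction with
  | base => intro _; exact Finset.Subset.refl _
  | succ m hm IH =>
      intro hsm
      exact (IH (by omega)).trans (G_succ_subset R (by omega))

lemma Hset : ∀ {i : ℕ}, i ≤ Fintype.card α →
    R.H i = ((Finset.range i).filter (HS R)).image R.elt := by
  intro i
  induction i with
  | zero => intro _; simp [R.H0]
  | succ m IH =>
      intro hm
      have hmlt : m < Fintype.card α := by omega
      rw [Finset.range_add_one, Finset.filter_insert]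
      by_cases hhs : HS R m
      · rw [(hs_step R hmlt hhs).1, if_pos hhs, Finset.image_insert, ← IH (by omega)]
      · rw [(gs_step R hmlt hhs).2.1, if_neg hhs, ← IH (by omega)]

lemma Gset : ∀ {i : ℕ}, i ≤ Fintype.card α →
    R.G i = ((Finset.range i).filter (fun j => ¬ HS R j)).image R.elt := by
  intro i
  induction i with
  | zero => intro _; simp [R.G0]
  | succ m IH =>
      intro hm
      have hmlt : m < Fintype.card α := by omega
      rw [Finset.range_add_one, Finset.filter_insert]
      by_cases hhs : HS R m
      · rw [(hs_step R hmlt hhs).2.1, if_neg (by simpa using hhs), ← IH (by omega)]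
      · rw [(gs_step R hmlt hhs).1, if_pos hhs, Finset.image_insert, ← IH (by omega)]

lemma card_H {i : ℕ} (hi : i ≤ Fintype.card α) :
    (R.H i).card = ((Finset.range i).filter (HS R)).card := by
  rw [Hset R hi]
  apply Finset.card_image_of_injOn
  intro a ha b hb hab
  simp only [Finset.mem_coe, Finset.mem_filter, Finset.mem_range] at ha hb
  exact R.distinct a (by omega) b (by omega) hab

lemma greedy_marg_h {i : ℕ} (hi : i < Fintype.card α) {x : α} (hx : x ∉ R.H i ∪ R.G i) :
    marg h x (R.H i) ≤ phi R i :=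
  le_trans (le_max_right _ _) (R.greedy i hi x hx)

lemma greedy_marg_g {i : ℕ} (hi : i < Fintype.card α) {x : α} (hx : x ∉ R.H i ∪ R.G i) :
    marg g x (R.G i) ≤ phi R i :=
  le_trans (le_max_left _ _) (R.greedy i hi x hx)

/-- selection step of an element. -/
noncomputable def sel (x : α) : ℕ := Nat.find (R.enum x)

lemma sel_spec (x : α) : sel R x < Fintype.card α ∧ R.elt (sel R x) = x :=
  Nat.find_spec (R.enum x)

lemma sel_uniq {j : ℕ} (hj : j < Fintype.card α) {x : α} (hx : R.elt j = x) :
    sel R x = j :=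
  R.distinct _ (sel_spec R x).1 j hj (by rw [(sel_spec R x).2, hx])

lemma mem_H_sel {i : ℕ} (hi : i ≤ Fintype.card α) {x : α} (hx : x ∈ R.H i) :
    sel R x < i ∧ HS R (sel R x) := by
  rw [Hset R hi] at hx
  obtain ⟨j, hj, hje⟩ := Finset.mem_image.mp hx
  simp only [Finset.mem_filter, Finset.mem_range] at hj
  have := sel_uniq R (by omega : j < Fintype.card α) hje
  rw [this]; exact ⟨hj.1, hj.2⟩

lemma mem_G_sel {i : ℕ} (hi : i ≤ Fintype.card α) {x : α} (hx : x ∈ R.G i) :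
    sel R x < i ∧ ¬ HS R (sel R x) := by
  rw [Gset R hi] at hx
  obtain ⟨j, hj, hje⟩ := Finset.mem_image.mp hx
  simp only [Finset.mem_filter, Finset.mem_range] at hj
  have := sel_uniq R (by omega : j < Fintype.card α) hje
  rw [this]; exact ⟨hj.1, hj.2⟩

lemma h_H_eq : ∀ {i : ℕ}, i ≤ Fintype.card α →
    h (R.H i) = h ∅ + ∑ j ∈ Finset.range i, (if HS R j then phi R j else 0) := by
  intro i
  induction i with
  | zero => intro _; simp [R.H0]
  | succ m IH =>
      intro hm
      have hmlt : m < Fintype.card α := by omega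
      rw [Finset.sum_range_succ, ← add_assoc, ← IH (by omega)]
      by_cases hhs : HS R m
      · rw [(hs_step R hmlt hhs).1, if_pos hhs, phi_eq_of_hs R hmlt hhs]
        unfold marg; ring
      · rw [(gs_step R hmlt hhs).2.1, if_neg hhs, add_zero]

lemma g_G_eq : ∀ {i : ℕ}, i ≤ Fintype.card α →
    g (R.G i) = g ∅ + ∑ j ∈ Finset.range i, (if HS R j then 0 else phi R j) := by
  intro i
  induction i with
  | zero => intro _; simp [R.G0]
  | succ m IH =>
      intro hm
      have hmlt : m < Fintype.card α := by omega
      rw [Finset.sum_range_succ, ← add_assoc, ← IH (by omega)]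
      by_cases hhs : HS R m
      · rw [(hs_step R hmlt hhs).2.1, if_pos hhs, add_zero]
      · rw [(gs_step R hmlt hhs).1, if_neg hhs, phi_eq_of_gs R hmlt hhs]
        unfold marg; ring

lemma HG_disjoint {i : ℕ} (hi : i ≤ Fintype.card α) : Disjoint (R.H i) (R.G i) := by
  rw [Finset.disjoint_left]
  intro x hxH hxG
  have h1 := mem_H_sel R hi hxH
  have h2 := mem_G_sel R hi hxG
  exact h2.2 h1.2

lemma HG_univ : R.H (Fintype.card α) ∪ R.G (Fintype.card α) = Finset.univ := by
  apply Finset.eq_univ_of_forall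
  intro x
  obtain ⟨i, hi, hie⟩ := R.enum x
  have hx : x ∈ R.H (i+1) ∪ R.G (i+1) := by
    by_cases hhs : HS R i
    · exact Finset.mem_union_left _ (by rw [(hs_step R hi hhs).1, ← hie]; exact Finset.mem_insert_self _ _)
    · exact Finset.mem_union_right _ (by rw [(gs_step R hi hhs).1, ← hie]; exact Finset.mem_insert_self _ _)
  rcases Finset.mem_union.mp hx with hxx | hxx
  · exact Finset.mem_union_left _ (H_mono R (by omega) le_rfl hxx)
  · exact Finset.mem_union_right _ (G_mono R (by omega) le_rfl hxx)

/-- discrete intermediate value for the H-cardinality. -/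
lemma exists_tau {k : ℕ} (hk : k ≤ (R.H (Fintype.card α)).card) :
    ∃ τ ≤ Fintype.card α, (R.H τ).card = k := by
  have key : ∀ m, m ≤ Fintype.card α → ∀ k', k' ≤ (R.H m).card → ∃ i ≤ m, (R.H i).card = k' := by
    intro m
    induction m with
    | zero => intro _ k' hk'; rw [R.H0] at hk'; simp at hk'; exact ⟨0, le_rfl, by simp [R.H0, hk']⟩
    | succ m IH =>
        intro hm k' hk'
        have hmlt : m < Fintype.card α := by omega
        have hstep : (R.H (m+1)).card ≤ (R.H m).card + 1 := by
          by_cases hhs : HS R m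
          · rw [(hs_step R hmlt hhs).1]; exact Finset.card_insert_le _ _
          · rw [(gs_step R hmlt hhs).2.1]; omega
        rcases le_or_gt k' ((R.H m).card) with hle | hgt
        · obtain ⟨i, hi, hic⟩ := IH (by omega) k' hle
          exact ⟨i, by omega, hic⟩
        · exact ⟨m+1, le_rfl, by omega⟩
  exact key _ le_rfl k hk

end RunLemmas

/-! ### the core lemma -/

set_option maxHeartbeats 1000000 in
lemma core (g h : Finset α → ℝ) (c γ : ℝ)
    (hgm : Mono g) (hhm : Mono h) (hg0 : Nonneg g) (hh0 : Nonneg h)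
    (hc0 : 0 < c) (hc1 : c ≤ 1) (hγ0 : 0 < γ) (hγ1 : γ ≤ 1)
    (hhC : CurvatureLE h c) (hgγ : GenSubRatioGE g γ) (hhγ : GenSubRatioGE h γ)
    (R : DGRun α g h) (k τ : ℕ) (hk1 : 1 ≤ k) (hτn : τ ≤ Fintype.card α)
    (hτc : (R.H τ).card = k) (S : Finset α) (hS : S.card = k) :
    γ * fObj g h S ≤ (1 + c * Real.exp c / (Real.exp c - 1)) * fObj g h (R.H τ) := by
  classical
  set n := Fintype.card α with hn
  set A := R.H τ with hA
  set C := c * Real.exp c / (Real.exp c - 1) with hCdef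
  have hC1 : 1 ≤ C := one_le_CC hc0 hc1
  set W := h (A ∩ S) with hW
  set X := ∑ j ∈ Finset.range τ, (if ¬ HS R j ∧ R.elt j ∈ S then phi R j else 0) with hX
  set P := ∑ j ∈ Finset.range τ, (if HS R j ∧ R.elt j ∈ S then phi R j else 0) with hP
  set Y := ∑ j ∈ Finset.range τ, (if HS R j ∧ R.elt j ∉ S then phi R j else 0) with hY
  have hφ0 : ∀ j, 0 ≤ phi R j := phi_nonneg R hhm
  have hX0 : 0 ≤ X := Finset.sum_nonneg (fun j _ => by split <;> simp [hφ0])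
  have hP0 : 0 ≤ P := Finset.sum_nonneg (fun j _ => by split <;> simp [hφ0])
  have hY0 : 0 ≤ Y := Finset.sum_nonneg (fun j _ => by split <;> simp [hφ0])
  have hkR : (1:ℝ) ≤ (k:ℝ) := by exact_mod_cast hk1
  have hk0R : (0:ℝ) < (k:ℝ) := by linarith
  -- ============ the per-step inequality (⋆) ============
  have star : ∀ i, i < τ → γ * h S ≤ γ*c*h (R.H i) + γ*(1-c)*W + X + k * phi R i := by
    intro i hiτ
    have hin : i < n := lt_of_lt_of_le hiτ hτn
    have hin' : i ≤ n := le_of_lt hin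
    -- pair inequality
    have e1 : (R.H i ∩ S) ∪ (R.H i \ S) = R.H i := by
      ext x; simp only [Finset.mem_union, Finset.mem_inter, Finset.mem_sdiff]; tauto
    have e2 : S ∪ (R.H i \ S) = S ∪ R.H i := by
      ext x; simp only [Finset.mem_union, Finset.mem_sdiff]; tauto
    have hpair : (1-c) * (h (R.H i) - h (R.H i ∩ S)) ≤ h (S ∪ R.H i) - h S := by
      have := tele_pair h c hhC (R.H i \ S) (R.H i ∩ S) S Finset.inter_subset_right
        (fun a ha => (Finset.mem_sdiff.mp ha).2)
      rwa [e1, e2] at this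
    -- upper telescope
    have hup : γ * h (S ∪ R.H i) ≤ γ * h (R.H i) + X + (k:ℝ) * phi R i := by
      set b : α → ℝ := fun a => if a ∈ R.G i then marg h a (R.H (sel R a)) else phi R i with hb
      have hmain : γ * h (R.H i ∪ (S \ R.H i)) ≤ γ * h (R.H i) + ∑ a ∈ (S \ R.H i), b a := by
        refine tele_up (fun T => γ * h T) b (S \ R.H i) (R.H i) ?_
        intro a ha Yy hYy
        have hmarg : marg (fun T => γ * h T) a Yy = γ * marg h a Yy := by
          unfold marg; ring
        rw [hmarg]
        simp only [hb]
        by_cases hG : a ∈ R.G i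
        · rw [if_pos hG]
          have hsel := mem_G_sel R hin' hG
          have hsub : R.H (sel R a) ⊆ Yy :=
            le_trans (H_mono R (le_of_lt hsel.1) hin') hYy
          exact genratio_le hhγ hsub a
        · rw [if_neg hG]
          have haH : a ∉ R.H i := (Finset.mem_sdiff.mp ha).2
          have hax : a ∉ R.H i ∪ R.G i := by simp [haH, hG]
          calc γ * marg h a Yy ≤ marg h a (R.H i) := genratio_le hhγ hYy a
            _ ≤ phi R i := greedy_marg_h R hin hax
      have hsum : ∑ a ∈ (S \ R.H i), b a ≤ X + (k:ℝ) * phi R i := by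
        rw [← Finset.sum_filter_add_sum_filter_not (S \ R.H i) (fun a => a ∈ R.G i)]
        have h1 : ∑ a ∈ (S \ R.H i).filter (fun a => a ∈ R.G i), b a ≤ X := by
          have e3 : ∀ a ∈ (S \ R.H i).filter (fun a => a ∈ R.G i),
              b a ≤ phi R (sel R a) := by
            intro a ha
            simp only [hb]
            rw [if_pos (Finset.mem_filter.mp ha).2]
            have hsel := sel_spec R a
            calc marg h a (R.H (sel R a)) = marg h (R.elt (sel R a)) (R.H (sel R a)) := by
                  rw [hsel.2]
              _ ≤ phi R (sel R a) := le_max_right _ _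
          calc ∑ a ∈ (S \ R.H i).filter (fun a => a ∈ R.G i), b a
              ≤ ∑ a ∈ (S \ R.H i).filter (fun a => a ∈ R.G i), phi R (sel R a) :=
                Finset.sum_le_sum e3
            _ = ∑ j ∈ ((S \ R.H i).filter (fun a => a ∈ R.G i)).image (sel R), phi R j := by
                rw [Finset.sum_image]
                intro x hx y hy hxy
                have h1 := sel_spec R x
                have h2 := sel_spec R y
                rw [← h1.2, ← h2.2, hxy]
            _ ≤ ∑ j ∈ (Finset.range τ).filter (fun j => ¬ HS R j ∧ R.elt j ∈ S), phi R j := by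
                apply Finset.sum_le_sum_of_subset_of_nonneg
                · intro j hj
                  obtain ⟨a, ha, haj⟩ := Finset.mem_image.mp hj
                  have haf := Finset.mem_filter.mp ha
                  have haS : a ∈ S := (Finset.mem_sdiff.mp haf.1).1
                  have hselG := mem_G_sel R hin' haf.2
                  subst haj
                  simp only [Finset.mem_filter, Finset.mem_range]
                  exact ⟨by omega, hselG.2, by rw [(sel_spec R a).2]; exact haS⟩
                · intro j _ _; exact hφ0 j
            _ = X := by rw [hX, Finset.sum_filter]
        have h2 : ∑ a ∈ (S \ R.H i).filter (fun a => a ∉ R.G i), b a ≤ (k:ℝ) * phi R i := by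
          have e4 : ∀ a ∈ (S \ R.H i).filter (fun a => a ∉ R.G i), b a = phi R i := by
            intro a ha
            simp only [hb]
            rw [if_neg (Finset.mem_filter.mp ha).2]
          rw [Finset.sum_congr rfl e4, Finset.sum_const, nsmul_eq_mul]
          apply mul_le_mul_of_nonneg_right _ (hφ0 i)
          have : ((S \ R.H i).filter (fun a => a ∉ R.G i)).card ≤ S.card := by
            apply Finset.card_le_card
            intro a ha
            exact (Finset.mem_sdiff.mp (Finset.mem_filter.mp ha).1).1
          rw [hS] at this
          exact_mod_cast this
        linarith
      have e5 : R.H i ∪ (S \ R.H i) = S ∪ R.H i := by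
        ext x; simp only [Finset.mem_union, Finset.mem_sdiff]; tauto
      rw [e5] at hmain
      linarith
    -- W_i ≤ W
    have hWi : h (R.H i ∩ S) ≤ W := by
      rw [hW]
      exact hhm (Finset.inter_subset_inter (H_mono R (le_of_lt hiτ) hτn) Finset.Subset.rfl)
    have hWi' : γ * (1-c) * h (R.H i ∩ S) ≤ γ * (1-c) * W := by
      apply mul_le_mul_of_nonneg_left hWi
      have : (0:ℝ) ≤ 1 - c := by linarith
      positivity
    nlinarith [hpair, hup, hWi', hγ0]
  -- ============ the recursion ============
  set q : ℝ := 1 - γ * c / k with hq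
  have hγc : 0 < γ * c := mul_pos hγ0 hc0
  have hγc1 : γ * c ≤ 1 := by nlinarith
  have hq0 : 0 ≤ q := by
    rw [hq]
    have : γ * c / k ≤ 1 := by
      rw [div_le_one hk0R]; linarith
    linarith
  have hq1 : q < 1 := by
    rw [hq]
    have : 0 < γ * c / k := div_pos hγc hk0R
    linarith
  set z : ℕ → ℝ := fun i => γ * h S - γ*c* h (R.H i) - γ*(1-c)*W - X with hz
  have hrec : ∀ i, i ≤ τ → z i ≤ max (z 0) 0 * q ^ (((Finset.range i).filter (HS R)).card) := by
    intro i
    induction i with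
    | zero => intro _; simp
    | succ m IH =>
        intro hm
        have hmτ : m < τ := by omega
        have hmn : m < n := by omega
        have hbound0 : 0 ≤ max (z 0) 0 * q ^ (((Finset.range m).filter (HS R)).card) :=
          mul_nonneg (le_max_right _ _) (pow_nonneg hq0 _)
        by_cases hhs : HS R m
        · have hHm : h (R.H (m+1)) = h (R.H m) + phi R m := by
            rw [(hs_step R hmn hhs).1, phi_eq_of_hs R hmn hhs]
            unfold marg; ring
          have hzsucc : z (m+1) = z m - γ*c*phi R m := by
            rw [hz]; simp only; rw [hHm]; ring
          have hcnt : ((Finset.range (m+1)).filter (HS R)).card =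
              ((Finset.range m).filter (HS R)).card + 1 := by
            rw [Finset.range_add_one, Finset.filter_insert, if_pos hhs,
              Finset.card_insert_of_notMem (by simp)]
          have hstar := star m hmτ
          have hkφ : z m ≤ (k:ℝ) * phi R m := by
            rw [hz]; simp only; linarith
          rcases le_or_gt (z m) 0 with hneg | hpos
          · have h1 : z (m+1) ≤ 0 := by
              rw [hzsucc]
              have : 0 ≤ γ*c*phi R m := mul_nonneg (le_of_lt hγc) (hφ0 m)
              linarith
            calc z (m+1) ≤ 0 := h1
              _ ≤ _ := mul_nonneg (le_max_right _ _) (pow_nonneg hq0 _)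
          · have h2 : z (m+1) ≤ z m * q := by
              rw [hzsucc, hq]
              have hφm : z m / k ≤ phi R m := by
                rw [div_le_iff₀ hk0R]; linarith
              have : γ * c * (z m / k) ≤ γ*c*phi R m :=
                mul_le_mul_of_nonneg_left hφm (le_of_lt hγc)
              have e6 : z m * (1 - γ * c / (k:ℝ)) = z m - γ * c * (z m / k) := by
                field_simp
              rw [e6]; linarith
            calc z (m+1) ≤ z m * q := h2
              _ ≤ (max (z 0) 0 * q ^ (((Finset.range m).filter (HS R)).card)) * q :=
                  mul_le_mul_of_nonneg_right (IH (by omega)) hq0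
              _ = _ := by rw [hcnt, pow_succ]; ring
        · have hHm : R.H (m+1) = R.H m := (gs_step R hmn hhs).2.1
          have hzsucc : z (m+1) = z m := by rw [hz]; simp only; rw [hHm]
          have hcnt : ((Finset.range (m+1)).filter (HS R)).card =
              ((Finset.range m).filter (HS R)).card := by
            rw [Finset.range_add_one, Finset.filter_insert, if_neg hhs]
          rw [hzsucc, hcnt]
          exact IH (by omega)
  have hcntτ : ((Finset.range τ).filter (HS R)).card = k := by
    rw [← card_H R hτn, hτc]
  have hzτ : z τ = z 0 - γ*c*(h A - h ∅) := by
    rw [hz]; simp only; rw [R.H0, ← hA]; ring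
  have hDA : 0 ≤ h A - h ∅ := sub_nonneg.2 (hhm (Finset.empty_subset _))
  have hz0 : z 0 ≤ C * (h A - h ∅) := by
    rcases le_or_gt (z 0) 0 with hneg | hpos
    · have : 0 ≤ C * (h A - h ∅) := mul_nonneg (by linarith) hDA
      linarith
    · have h1 := hrec τ le_rfl
      rw [hcntτ, hzτ, max_eq_left (le_of_lt hpos)] at h1
      have hkey := key_exp k hc0 hc1 hγ0 hγ1 hk1
      rw [← hCdef, ← hq] at hkey
      have hqk : q ^ k < 1 := by
        calc q ^ k ≤ q ^ 1 := pow_le_pow_of_le_one hq0 (le_of_lt hq1) hk1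
          _ = q := pow_one q
          _ < 1 := hq1
      have h3 : z 0 * (1 - q^k) ≤ γ * c * (h A - h ∅) := by nlinarith
      have h4 : γ * c * (h A - h ∅) ≤ C * (1 - q^k) * (h A - h ∅) :=
        mul_le_mul_of_nonneg_right hkey hDA
      have h5 : z 0 * (1 - q^k) ≤ C * (h A - h ∅) * (1 - q^k) := by nlinarith
      have h6 : 0 < 1 - q^k := by linarith
      exact le_of_mul_le_mul_right (by linarith [h5]) h6
  -- ============ the W bound ============
  have hWP : (1-c) * (W - h ∅) ≤ P := by
    have key : ∀ m, m ≤ τ → (1-c) * (h (R.H m ∩ S) - h ∅) ≤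
        ∑ j ∈ Finset.range m, (if HS R j ∧ R.elt j ∈ S then phi R j else 0) := by
      intro m
      induction m with
      | zero => intro _; simp [R.H0]
      | succ m IH =>
          intro hm
          have hmn : m < n := by omega
          rw [Finset.sum_range_succ]
          by_cases hhs : HS R m
          · by_cases hiS : R.elt m ∈ S
            · have e1 : R.H (m+1) ∩ S = insert (R.elt m) (R.H m ∩ S) := by
                rw [(hs_step R hmn hhs).1]
                ext x
                simp only [Finset.mem_inter, Finset.mem_insert]
                constructor
                · rintro ⟨hx1 | hx1, hx2⟩
                  · exact Or.inl hx1
                  · exact Or.inr ⟨hx1, hx2⟩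
                · rintro (hx1 | ⟨hx1, hx2⟩)
                  · exact ⟨Or.inl hx1, hx1 ▸ hiS⟩
                  · exact ⟨Or.inr hx1, hx2⟩
              have hem : R.elt m ∉ R.H m := by
                have := R.mem m hmn
                simp only [Finset.mem_union] at this
                tauto
              have hcurv : (1-c) * marg h (R.elt m) (R.H m ∩ S) ≤ marg h (R.elt m) (R.H m) :=
                curv_le hhC Finset.inter_subset_left hem
              have hφm : marg h (R.elt m) (R.H m) = phi R m := (phi_eq_of_hs R hmn hhs).symm
              have hIH := IH (by omega)
              rw [e1, if_pos ⟨hhs, hiS⟩]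
              rw [hφm] at hcurv
              unfold marg at hcurv
              linarith
            · have e1 : R.H (m+1) ∩ S = R.H m ∩ S := by
                rw [(hs_step R hmn hhs).1]
                ext x
                simp only [Finset.mem_inter, Finset.mem_insert]
                constructor
                · rintro ⟨hx1 | hx1, hx2⟩
                  · exact absurd (hx1 ▸ hx2) hiS
                  · exact ⟨hx1, hx2⟩
                · rintro ⟨hx1, hx2⟩; exact ⟨Or.inr hx1, hx2⟩
              rw [e1, if_neg (by tauto), add_zero]
              exact IH (by omega)
          · rw [(gs_step R hmn hhs).2.1, if_neg (by tauto), add_zero]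
            exact IH (by omega)
    have := key τ le_rfl
    rwa [← hA, ← hW, ← hP] at this
  -- ============ the g-side ============
  have hGnA : R.G n ⊆ Aᶜ := by
    intro x hx
    rw [Finset.mem_compl]
    intro hxA
    have hxH : x ∈ R.H n := H_mono R hτn le_rfl hxA
    exact (Finset.disjoint_left.mp (HG_disjoint R le_rfl)) hxH hx
  have hgside : γ * g Sᶜ ≤ γ * g Aᶜ + Y := by
    have hsub1 : Sᶜ ⊆ Aᶜ ∪ (A \ S) := by
      intro x hx
      rw [Finset.mem_compl] at hx
      by_cases hxA : x ∈ A
      · exact Finset.mem_union_right _ (Finset.mem_sdiff.mpr ⟨hxA, hx⟩)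
      · exact Finset.mem_union_left _ (Finset.mem_compl.mpr hxA)
    have h1 : γ * g Sᶜ ≤ γ * g (Aᶜ ∪ (A \ S)) :=
      mul_le_mul_of_nonneg_left (hgm hsub1) (le_of_lt hγ0)
    set b : α → ℝ := fun a => marg g a (R.G (sel R a)) with hb
    have h2 : γ * g (Aᶜ ∪ (A \ S)) ≤ γ * g Aᶜ + ∑ a ∈ A \ S, b a := by
      refine tele_up (fun T => γ * g T) b (A \ S) Aᶜ ?_
      intro a ha Yy hYy
      have hmarg : marg (fun T => γ * g T) a Yy = γ * marg g a Yy := by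
        unfold marg; ring
      rw [hmarg]
      simp only [hb]
      have haA : a ∈ A := (Finset.mem_sdiff.mp ha).1
      have hselH := mem_H_sel R hτn haA
      have hsub : R.G (sel R a) ⊆ Yy := by
        refine le_trans (le_trans (G_mono R ?_ le_rfl) hGnA) hYy
        omega
      exact genratio_le hgγ hsub a
    have h3 : ∑ a ∈ A \ S, b a ≤ Y := by
      have e3 : ∀ a ∈ A \ S, b a ≤ phi R (sel R a) := by
        intro a ha
        simp only [hb]
        have hsel := sel_spec R a
        calc marg g a (R.G (sel R a)) = marg g (R.elt (sel R a)) (R.G (sel R a)) := by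
              rw [hsel.2]
          _ ≤ phi R (sel R a) := le_max_left _ _
      calc ∑ a ∈ A \ S, b a ≤ ∑ a ∈ A \ S, phi R (sel R a) := Finset.sum_le_sum e3
        _ = ∑ j ∈ (A \ S).image (sel R), phi R j := by
            rw [Finset.sum_image]
            intro x hx y hy hxy
            have h1' := sel_spec R x
            have h2' := sel_spec R y
            rw [← h1'.2, ← h2'.2, hxy]
        _ ≤ ∑ j ∈ (Finset.range τ).filter (fun j => HS R j ∧ R.elt j ∉ S), phi R j := by
            apply Finset.sum_le_sum_of_subset_of_nonneg
            · intro j hj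
              obtain ⟨a, ha, haj⟩ := Finset.mem_image.mp hj
              have haf := Finset.mem_sdiff.mp ha
              have hselH := mem_H_sel R hτn haf.1
              subst haj
              simp only [Finset.mem_filter, Finset.mem_range]
              exact ⟨hselH.1, hselH.2, by rw [(sel_spec R a).2]; exact haf.2⟩
            · intro j _ _; exact hφ0 j
        _ = Y := by rw [hY, Finset.sum_filter]
    linarith
  -- ============ X ≤ g Aᶜ ============
  have hXg : X ≤ g Aᶜ := by
    have h1 : X ≤ ∑ j ∈ Finset.range n, (if HS R j then 0 else phi R j) := by
      calc X ≤ ∑ j ∈ Finset.range τ, (if HS R j then 0 else phi R j) := by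
            apply Finset.sum_le_sum
            intro j _
            by_cases hhs : HS R j
            · simp [hhs]
            · by_cases hjS : R.elt j ∈ S <;> simp [hhs, hjS, hφ0 j]
        _ ≤ _ := by
            apply Finset.sum_le_sum_of_subset_of_nonneg
              (Finset.range_subset_range.mpr hτn)
            intro j _ _
            split <;> simp [hφ0]
    have h2 : g (R.G n) = g ∅ + ∑ j ∈ Finset.range n, (if HS R j then 0 else phi R j) :=
      g_G_eq R le_rfl
    have h3 : g (R.G n) ≤ g Aᶜ := hgm hGnA
    have h4 : 0 ≤ g ∅ := hg0 _
    linarith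
  -- ============ P + Y = h A - h ∅ ============
  have hPY : P + Y = h A - h ∅ := by
    have h1 : h A = h ∅ + ∑ j ∈ Finset.range τ, (if HS R j then phi R j else 0) :=
      h_H_eq R hτn
    have h2 : P + Y = ∑ j ∈ Finset.range τ, (if HS R j then phi R j else 0) := by
      rw [hP, hY, ← Finset.sum_add_distrib]
      apply Finset.sum_congr rfl
      intro j _
      by_cases hhs : HS R j
      · by_cases hjS : R.elt j ∈ S <;> simp [hhs, hjS]
      · simp [hhs]
    linarith
  -- ============ assembly ============
  have hz0eq : γ * h S = z 0 + γ*c*h ∅ + γ*(1-c)*W + X := by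
    rw [hz]; simp only; rw [R.H0]; ring
  have hWP' : γ*(1-c)*W ≤ γ*(1-c)*h ∅ + γ * P := by
    have := mul_le_mul_of_nonneg_left hWP (le_of_lt hγ0)
    nlinarith
  have hγP : γ * P ≤ P := by nlinarith
  have hhe0 : 0 ≤ h ∅ := hh0 _
  have hgA0 : 0 ≤ g Aᶜ := hg0 _
  have hγgA : γ * g Aᶜ ≤ C * g Aᶜ := by nlinarith
  have hhel : γ*c*h ∅ + γ*(1-c)*h ∅ ≤ C * h ∅ := by nlinarith
  unfold fObj
  linarith [hz0, hWP', hγP, hgside, hXg, hPY, hhel, hγgA, hz0eq, hhe0]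

/-! ### swapping the two sides of a run -/

def DGRun.swap {g h : Finset α → ℝ} (R : DGRun α g h) : DGRun α h g where
  elt := R.elt
  H := R.G
  G := R.H
  H0 := R.G0
  G0 := R.H0
  mem := fun i hi => by rw [Finset.union_comm]; exact R.mem i hi
  distinct := R.distinct
  enum := R.enum
  greedy := fun i hi x hx => by
    rw [max_comm (marg h x (R.H i)), max_comm (marg h (R.elt i) (R.H i))]
    exact R.greedy i hi x (by rwa [Finset.union_comm] at hx)
  step := fun i hi => (R.step i hi).symm

lemma swap_H {g h : Finset α → ℝ} (R : DGRun α g h) : R.swap.H = R.G := rfl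
lemma swap_G {g h : Finset α → ℝ} (R : DGRun α g h) : R.swap.G = R.H := rfl
lemma swap_elt {g h : Finset α → ℝ} (R : DGRun α g h) : R.swap.elt = R.elt := rfl

/-! ### the H-selection list of a run -/

noncomputable def hlist {g h : Finset α → ℝ} (R : DGRun α g h) : ℕ → List α
  | 0 => []
  | (m+1) => hlist R m ++ (if HS R m then [R.elt m] else [])

section HlistLemmas

variable {g h : Finset α → ℝ} (R : DGRun α g h)

lemma hlist_toFinset : ∀ {m : ℕ}, m ≤ Fintype.card α → (hlist R m).toFinset = R.H m := by
  intro m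
  induction m with
  | zero => intro _; simp [hlist, R.H0]
  | succ m IH =>
      intro hm
      have hmn : m < Fintype.card α := by omega
      rw [hlist, List.toFinset_append, IH (by omega)]
      by_cases hhs : HS R m
      · rw [if_pos hhs, (hs_step R hmn hhs).1]
        ext x
        simp [or_comm]
      · rw [if_neg hhs, (gs_step R hmn hhs).2.1]
        simp

lemma hlist_nodup : ∀ {m : ℕ}, m ≤ Fintype.card α → (hlist R m).Nodup := by
  intro m
  induction m with
  | zero => intro _; simp [hlist]
  | succ m IH =>
      intro hm
      have hmn : m < Fintype.card α := by omega
      rw [hlist]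
      refine List.Nodup.append (IH (by omega)) ?_ ?_
      · split <;> simp
      · intro a ha hb
        split at hb
        · simp only [List.mem_singleton] at hb
          have : a ∈ R.H m := by
            rw [← hlist_toFinset R (le_of_lt hmn)]
            exact List.mem_toFinset.mpr ha
          rw [hb] at this
          exact (R.mem m hmn) (Finset.mem_union_left _ this)
        · simp at hb

lemma hlist_length {m : ℕ} (hm : m ≤ Fintype.card α) :
    (hlist R m).length = (R.H m).card := by
  rw [← hlist_toFinset R hm, List.toFinset_card_of_nodup (hlist_nodup R hm)]

lemma hlist_prefix : ∀ {m m' : ℕ}, m ≤ m' → hlist R m <+: hlist R m' := by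
  intro m m' hmm
  induction m', hmm using Nat.le_induction with
  | base => exact List.prefix_rfl
  | succ m' hm' IH => exact IH.trans ⟨(if HS R m' then [R.elt m'] else []), rfl⟩

lemma hlist_take {τ k : ℕ} (hτ : τ ≤ Fintype.card α) (hτc : (R.H τ).card = k) :
    (hlist R (Fintype.card α)).take k = hlist R τ := by
  have h1 := List.prefix_iff_eq_take.mp (hlist_prefix R hτ)
  rw [hlist_length R hτ, hτc] at h1
  exact h1.symm

end HlistLemmas

/-! ### construction of a double-greedy run -/

section MkRun

variable (g h : Finset α → ℝ) [Nonempty α]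

noncomputable def pickMax (p : Finset α × Finset α) : α :=
  if hne : (Finset.univ \ (p.1 ∪ p.2)).Nonempty then
    (Finset.exists_max_image (Finset.univ \ (p.1 ∪ p.2))
      (fun x => max (marg g x p.2) (marg h x p.1)) hne).choose
  else Classical.arbitrary α

lemma pickMax_spec (p : Finset α × Finset α) (hne : (Finset.univ \ (p.1 ∪ p.2)).Nonempty) :
    pickMax g h p ∈ Finset.univ \ (p.1 ∪ p.2) ∧
      ∀ y ∈ Finset.univ \ (p.1 ∪ p.2),
        max (marg g y p.2) (marg h y p.1) ≤
          max (marg g (pickMax g h p) p.2) (marg h (pickMax g h p) p.1) := by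
  rw [pickMax, dif_pos hne]
  exact (Finset.exists_max_image (Finset.univ \ (p.1 ∪ p.2))
      (fun x => max (marg g x p.2) (marg h x p.1)) hne).choose_spec

noncomputable def dgState : ℕ → Finset α × Finset α
  | 0 => (∅, ∅)
  | (i+1) =>
      if marg g (pickMax g h (dgState i)) (dgState i).2 ≤
          marg h (pickMax g h (dgState i)) (dgState i).1
      then (insert (pickMax g h (dgState i)) (dgState i).1, (dgState i).2)
      else ((dgState i).1, insert (pickMax g h (dgState i)) (dgState i).2)

lemma dgState_succ_of_le (i : ℕ)
    (hc : marg g (pickMax g h (dgState g h i)) (dgState g h i).2 ≤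
      marg h (pickMax g h (dgState g h i)) (dgState g h i).1) :
    dgState g h (i+1) =
      (insert (pickMax g h (dgState g h i)) (dgState g h i).1, (dgState g h i).2) := by
  rw [dgState, if_pos hc]

lemma dgState_succ_of_gt (i : ℕ)
    (hc : ¬ marg g (pickMax g h (dgState g h i)) (dgState g h i).2 ≤
      marg h (pickMax g h (dgState g h i)) (dgState g h i).1) :
    dgState g h (i+1) =
      ((dgState g h i).1, insert (pickMax g h (dgState g h i)) (dgState g h i).2) := by
  rw [dgState, if_neg hc]

lemma dgState_union_succ (i : ℕ) :
    (dgState g h (i+1)).1 ∪ (dgState g h (i+1)).2 =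
      insert (pickMax g h (dgState g h i)) ((dgState g h i).1 ∪ (dgState g h i).2) := by
  by_cases hc : marg g (pickMax g h (dgState g h i)) (dgState g h i).2 ≤
      marg h (pickMax g h (dgState g h i)) (dgState g h i).1
  · rw [dgState_succ_of_le g h i hc]
    simp [Finset.insert_union]
  · rw [dgState_succ_of_gt g h i hc]
    simp [Finset.union_insert]

lemma dgState_card : ∀ i, i ≤ Fintype.card α →
    ((dgState g h i).1 ∪ (dgState g h i).2).card = i := by
  intro i
  induction i with
  | zero => intro _; simp [dgState]
  | succ i IH =>
      intro hi
      have hc := IH (by omega)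
      have hne : (Finset.univ \ ((dgState g h i).1 ∪ (dgState g h i).2)).Nonempty := by
        rw [← Finset.card_pos, Finset.card_sdiff_of_subset (Finset.subset_univ _), Finset.card_univ, hc]
        omega
      have hpick := (pickMax_spec g h _ hne).1
      rw [Finset.mem_sdiff] at hpick
      rw [dgState_union_succ, Finset.card_insert_of_notMem hpick.2, hc]

lemma dgState_nonempty {i : ℕ} (hi : i < Fintype.card α) :
    (Finset.univ \ ((dgState g h i).1 ∪ (dgState g h i).2)).Nonempty := by
  rw [← Finset.card_pos, Finset.card_sdiff_of_subset (Finset.subset_univ _), Finset.card_univ,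
    dgState_card g h i (by omega)]
  omega

lemma dgState_union_mono (i : ℕ) :
    (dgState g h i).1 ∪ (dgState g h i).2 ⊆ (dgState g h (i+1)).1 ∪ (dgState g h (i+1)).2 := by
  rw [dgState_union_succ]
  exact Finset.subset_insert _ _

noncomputable def mkRun : DGRun α g h where
  elt i := pickMax g h (dgState g h i)
  H i := (dgState g h i).1
  G i := (dgState g h i).2
  H0 := rfl
  G0 := rfl
  mem := fun i hi => by
    have := (pickMax_spec g h _ (dgState_nonempty g h hi)).1
    rw [Finset.mem_sdiff] at this
    exact this.2
  distinct := by
    have key : ∀ i j, i < j → j < Fintype.card α →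
        pickMax g h (dgState g h i) ≠ pickMax g h (dgState g h j) := by
      intro i j hij hj
      have h1 : pickMax g h (dgState g h i) ∈ (dgState g h (i+1)).1 ∪ (dgState g h (i+1)).2 := by
        rw [dgState_union_succ]; exact Finset.mem_insert_self _ _
      have h2 : (dgState g h (i+1)).1 ∪ (dgState g h (i+1)).2 ⊆
          (dgState g h j).1 ∪ (dgState g h j).2 := by
        clear h1
        induction j, (by omega : i + 1 ≤ j) using Nat.le_induction with
        | base => exact Finset.Subset.refl _
        | succ m hm IH =>
            exact (IH (by omega) (by omega)).trans (dgState_union_mono g h m)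
      have h3 := (pickMax_spec g h _ (dgState_nonempty g h hj)).1
      rw [Finset.mem_sdiff] at h3
      intro hcon
      exact h3.2 (hcon ▸ h2 h1)
    intro i hi j hj hij
    rcases lt_trichotomy i j with hlt | heq | hgt
    · exact absurd hij (key i j hlt hj)
    · exact heq
    · exact absurd hij.symm (key j i hgt hi)
  enum := by
    have key : ∀ i, i ≤ Fintype.card α → ∀ x ∈ (dgState g h i).1 ∪ (dgState g h i).2,
        ∃ j < i, pickMax g h (dgState g h j) = x := by
      intro i
      induction i with
      | zero => intro _ x hx; simp [dgState] at hx
      | succ i IH =>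
          intro hi x hx
          rw [dgState_union_succ, Finset.mem_insert] at hx
          rcases hx with hx | hx
          · exact ⟨i, by omega, hx.symm⟩
          · obtain ⟨j, hj, hje⟩ := IH (by omega) x hx
            exact ⟨j, by omega, hje⟩
    intro x
    have huniv : (dgState g h (Fintype.card α)).1 ∪ (dgState g h (Fintype.card α)).2 =
        Finset.univ := by
      apply Finset.eq_univ_of_card
      exact dgState_card g h _ le_rfl
    exact key (Fintype.card α) le_rfl x (huniv ▸ Finset.mem_univ x)
  greedy := fun i hi x hx => by
    exact (pickMax_spec g h _ (dgState_nonempty g h hi)).2 x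
      (Finset.mem_sdiff.mpr ⟨Finset.mem_univ x, hx⟩)
  step := fun i hi => by
    by_cases hc : marg g (pickMax g h (dgState g h i)) (dgState g h i).2 ≤
        marg h (pickMax g h (dgState g h i)) (dgState g h i).1
    · left
      refine ⟨?_, ?_, hc⟩
      · show (dgState g h (i+1)).1 = insert (pickMax g h (dgState g h i)) (dgState g h i).1
        rw [dgState_succ_of_le g h i hc]
      · show (dgState g h (i+1)).2 = (dgState g h i).2
        rw [dgState_succ_of_le g h i hc]
    · right
      refine ⟨?_, ?_, le_of_not_ge hc⟩
      · show (dgState g h (i+1)).2 = insert (pickMax g h (dgState g h i)) (dgState g h i).2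
        rw [dgState_succ_of_gt g h i hc]
      · show (dgState g h (i+1)).1 = (dgState g h i).1
        rw [dgState_succ_of_gt g h i hc]

end MkRun

/-! ### the main theorem -/



set_option maxHeartbeats 1000000 in
theorem stmt0 (g h : Finset α → ℝ) (c γ : ℝ)
    (hgm : Mono g) (hhm : Mono h) (hg0 : Nonneg g) (hh0 : Nonneg h)
    (hc0 : 0 < c) (hc1 : c ≤ 1) (hγ0 : 0 < γ) (hγ1 : γ ≤ 1)
    (hgC : CurvatureLE g c) (hhC : CurvatureLE h c)
    (hgγ : GenSubRatioGE g γ) (hhγ : GenSubRatioGE h γ) :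
    ∃ π : List α, π.Nodup ∧ (∀ x : α, x ∈ π) ∧
      ∀ k : ℕ, 1 ≤ k → k ≤ Fintype.card α → ∀ S : Finset α, S.card = k →
        (1 / γ) * (1 + c * Real.exp c / (Real.exp c - 1)) *
            fObj g h (π.take k).toFinset ≥ fObj g h S := by
  classical
  rcases Nat.eq_zero_or_pos (Fintype.card α) with hzero | hpos
  · refine ⟨[], List.nodup_nil, ?_, ?_⟩
    · intro x
      have : Nonempty α := ⟨x⟩
      rw [Fintype.card_eq_zero_iff] at hzero
      exact (hzero.false x).elim
    · intro k hk1 hkn S hS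
      exact absurd hkn (by omega)
  · haveI hne : Nonempty α := Fintype.card_pos_iff.mp hpos
    set C := c * Real.exp c / (Real.exp c - 1) with hC
    have hC1 : 1 ≤ C := one_le_CC hc0 hc1
    set R := mkRun g h with hR
    set n := Fintype.card α with hn
    set LH := hlist R n with hLH
    set LG := hlist R.swap n with hLG
    set π := LH ++ LG.reverse with hπ
    have hLHf : LH.toFinset = R.H n := hlist_toFinset R le_rfl
    have hLGf : LG.toFinset = R.G n := hlist_toFinset R.swap le_rfl
    have hLHnd : LH.Nodup := hlist_nodup R le_rfl
    have hLGnd : LG.Nodup := hlist_nodup R.swap le_rfl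
    have hdisj : LH.Disjoint LG.reverse := by
      intro a ha hb
      have h1 : a ∈ R.H n := by rw [← hLHf]; exact List.mem_toFinset.mpr ha
      have h2 : a ∈ R.G n := by
        rw [← hLGf]; exact List.mem_toFinset.mpr (List.mem_reverse.mp hb)
      exact Finset.disjoint_left.mp (HG_disjoint R le_rfl) h1 h2
    have hπnd : π.Nodup := hLHnd.append (List.nodup_reverse.mpr hLGnd) hdisj
    have hπf : π.toFinset = Finset.univ := by
      rw [hπ, List.toFinset_append, List.toFinset_reverse, hLHf, hLGf]
      exact HG_univ R
    have hmem : ∀ x : α, x ∈ π := fun x => by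
      rw [← List.mem_toFinset, hπf]; exact Finset.mem_univ x
    have hπlen : π.length = n := by
      rw [← List.toFinset_card_of_nodup hπnd, hπf, Finset.card_univ]
    have hLHlen : LH.length = (R.H n).card := hlist_length R le_rfl
    have hLGlen : LG.length = (R.G n).card := hlist_length R.swap le_rfl
    have hhngn : (R.H n).card + (R.G n).card = n := by
      rw [← Finset.card_union_of_disjoint (HG_disjoint R le_rfl), HG_univ R, Finset.card_univ]
    have hred : ∀ S T : Finset α, γ * fObj g h S ≤ (1 + C) * fObj g h T →
        (1/γ) * (1 + C) * fObj g h T ≥ fObj g h S := by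
      intro S T hy
      rw [ge_iff_le]
      have e : (1/γ) * (1 + C) * fObj g h T = ((1 + C) * fObj g h T) / γ := by ring
      rw [e, le_div_iff₀ hγ0]
      linarith [hy]
    refine ⟨π, hπnd, hmem, ?_⟩
    intro k hk1 hkn S hS
    rcases eq_or_lt_of_le hkn with hkn' | hklt
    · -- k = n : S is the whole ground set
      have hSuniv : S = Finset.univ := Finset.eq_univ_of_card S (by rw [hS, hkn', hn])
      have htake : π.take k = π := List.take_of_length_le (by omega)
      rw [htake, hπf, hSuniv]
      have hf0 : 0 ≤ fObj g h (Finset.univ : Finset α) := add_nonneg (hh0 _) (hg0 _)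
      have h1γ : 1 ≤ 1/γ := one_le_one_div hγ0 hγ1
      rw [ge_iff_le]
      have hK : 1 ≤ (1/γ) * (1 + C) := by nlinarith
      have h2 : 1 * fObj g h (Finset.univ : Finset α) ≤
          ((1/γ) * (1 + C)) * fObj g h (Finset.univ : Finset α) :=
        mul_le_mul_of_nonneg_right hK hf0
      linarith
    · by_cases hcase : k ≤ (R.H n).card
      · -- direct case
        obtain ⟨τ, hτn, hτc⟩ := exists_tau R hcase
        have htake : π.take k = hlist R τ := by
          rw [hπ, List.take_append_of_le_length (by omega : k ≤ LH.length)]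
          exact hlist_take R hτn hτc
        have hpre : (π.take k).toFinset = R.H τ := by
          rw [htake]; exact hlist_toFinset R hτn
        rw [hpre]
        exact hred S (R.H τ)
          (core g h c γ hgm hhm hg0 hh0 hc0 hc1 hγ0 hγ1 hhC hgγ hhγ R k τ hk1 hτn hτc S hS)
      · -- mirror case
        push_neg at hcase
        set m := n - k with hm
        have hm1 : 1 ≤ m := by omega
        have hmgn : m ≤ (R.G n).card := by omega
        obtain ⟨σ, hσn, hσc⟩ := exists_tau R.swap hmgn
        have hσc' : (R.G σ).card = m := hσc
        have hkLH : LH.length ≤ k := by omega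
        have htake1 : π.take k = LH ++ LG.reverse.take (k - LH.length) := by
          rw [hπ]
          have e0 : k = LH.length + (k - LH.length) := by omega
          rw [List.take_append, List.take_of_length_le hkLH]
        have hdrop : LG.reverse.take (k - LH.length) = (LG.drop m).reverse := by
          have e2 : LG.reverse = (LG.drop m).reverse ++ (LG.take m).reverse := by
            calc LG.reverse = (LG.take m ++ LG.drop m).reverse := by
                  rw [List.take_append_drop]
              _ = (LG.drop m).reverse ++ (LG.take m).reverse := List.reverse_append
          have e3 : (LG.drop m).reverse.length = k - LH.length := by
            rw [List.length_reverse, List.length_drop]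
            omega
          rw [e2, ← e3, List.take_left]
        have htakeLG : LG.take m = hlist R.swap σ := hlist_take R.swap hσn hσc
        have hGσf : (LG.take m).toFinset = R.G σ := by
          rw [htakeLG]; exact hlist_toFinset R.swap hσn
        have hdropf : (LG.drop m).toFinset = R.G n \ R.G σ := by
          ext x
          rw [List.mem_toFinset, Finset.mem_sdiff, ← hLGf, ← hGσf]
          constructor
          · intro hx
            refine ⟨List.mem_toFinset.mpr (List.mem_of_mem_drop hx), fun hmem' => ?_⟩
            exact (List.disjoint_take_drop hLGnd le_rfl)
              (List.mem_toFinset.mp hmem') hx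
          · rintro ⟨hx1, hx2⟩
            have : x ∈ LG.take m ++ LG.drop m := by
              rw [List.take_append_drop]; exact List.mem_toFinset.mp hx1
            rcases List.mem_append.mp this with hx3 | hx3
            · exact absurd (List.mem_toFinset.mpr hx3) hx2
            · exact hx3
        have hfin : (π.take k).toFinset = (R.G σ)ᶜ := by
          rw [htake1, List.toFinset_append, hdrop, List.toFinset_reverse, hLHf, hdropf]
          ext x
          simp only [Finset.mem_union, Finset.mem_sdiff, Finset.mem_compl]
          constructor
          · rintro (hx | ⟨hx1, hx2⟩)
            · intro hxσ
              have hxG : x ∈ R.G n := G_mono R hσn le_rfl hxσ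
              exact Finset.disjoint_left.mp (HG_disjoint R le_rfl) hx hxG
            · exact hx2
          · intro hxσ
            have : x ∈ R.H n ∪ R.G n := by rw [HG_univ R]; exact Finset.mem_univ x
            rcases Finset.mem_union.mp this with hx | hx
            · exact Or.inl hx
            · exact Or.inr ⟨hx, hxσ⟩
        rw [hfin]
        have hSc : Sᶜ.card = m := by rw [Finset.card_compl, hS, ← hn]
        have hcore := core h g c γ hhm hgm hh0 hg0 hc0 hc1 hγ0 hγ1 hgC hhγ hgγ
          R.swap m σ hm1 hσn hσc Sᶜ hSc
        have e4 : fObj h g Sᶜ = fObj g h S := by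
          unfold fObj; rw [compl_compl]; ring
        have e5 : fObj h g (R.G σ) = fObj g h ((R.G σ)ᶜ) := by
          unfold fObj; rw [compl_compl]; ring
        have hcore2 : γ * fObj g h S ≤ (1 + C) * fObj h g (R.G σ) := by
          rw [← e4]; exact hcore
        rw [e5] at hcore2
        exact hred S _ hcore2


end IncDec
end

section
/- Let g, h : 2^E → ℝ≥0 be monotone and let ρ ≥ 1. Suppose π^h = (a_1, …, a_n) is an ordering of E such that ρ·h({a_1, …, a_k}) ≥ h(S) for every k ∈ {1, …, n} and every S ⊆ E with |S| = k, and π^g = (b_1, …, b_n) is an ordering of E such that ρ·g({b_1, …, b_k}) ≥ g(S) for every k ∈ {1, …, n} and every S ⊆ E with |S| = k. Let A_k = {a_1, …, a_k} and B_k = {b_{n−k+1}, …, b_n} (the last k elements of π^g). Then for every k ∈ {1, …, n} and every S ⊆ E with |S| = k, f(A_k) + f(B_k) ≥ (1/ρ)·f(S). -/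
namespace IncDec

open Finset

variable {α : Type*} [Fintype α] [DecidableEq α]

theorem stmt3 (g h : Finset α → ℝ) (ρ : ℝ) (hρ : 1 ≤ ρ)
    (hgm : Mono g) (hhm : Mono h) (hg0 : Nonneg g) (hh0 : Nonneg h)
    (a b : List α) (ha : a.Nodup) (haE : ∀ x : α, x ∈ a)
    (hb : b.Nodup) (hbE : ∀ x : α, x ∈ b)
    (hA : ∀ k : ℕ, 1 ≤ k → k ≤ Fintype.card α → ∀ S : Finset α, S.card = k →
      ρ * h (a.take k).toFinset ≥ h S)
    (hB : ∀ k : ℕ, 1 ≤ k → k ≤ Fintype.card α → ∀ S : Finset α, S.card = k →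
      ρ * g (b.take k).toFinset ≥ g S) :
    ∀ k : ℕ, 1 ≤ k → k ≤ Fintype.card α → ∀ S : Finset α, S.card = k →
      fObj g h (a.take k).toFinset + fObj g h (b.drop (Fintype.card α - k)).toFinset ≥
        (1 / ρ) * fObj g h S := by
  intro k hk1 hkn S hS
  have hρ0 : (0:ℝ) < ρ := lt_of_lt_of_le one_pos hρ
  set m := Fintype.card α - k with hm
  have key : ((b.take m).toFinset)ᶜ = (b.drop m).toFinset := by
    have hsplit := List.take_append_drop m b
    ext x
    simp only [Finset.mem_compl, List.mem_toFinset]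
    constructor
    · intro hx
      have hxb := hbE x
      rw [← hsplit, List.mem_append] at hxb
      tauto
    · intro hx hx'
      have hnd : b.Nodup := hb
      rw [← hsplit, List.nodup_append] at hnd
      exact hnd.2.2 x hx' x hx rfl
  have hScc : Sᶜ.card = m := by rw [Finset.card_compl, hS]
  have h1 : h S ≤ ρ * h (a.take k).toFinset := hA k hk1 hkn S hS
  have h2 : g Sᶜ ≤ ρ * g ((b.take m).toFinset) := by
    rcases Nat.eq_zero_or_pos m with hm0 | hm0
    · have hSc : Sᶜ = ∅ := Finset.card_eq_zero.mp (by rw [hScc, hm0])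
      rw [hSc]
      have : g ∅ ≤ g ((b.take m).toFinset) := hgm (Finset.empty_subset _)
      nlinarith [hg0 (∅ : Finset α), hg0 ((b.take m).toFinset)]
    · exact hB m hm0 (Nat.sub_le _ _) Sᶜ hScc
  have hBc : ((b.drop m).toFinset)ᶜ = (b.take m).toFinset := by
    rw [← key, compl_compl]
  unfold fObj
  rw [hBc, ge_iff_le, one_div, inv_mul_le_iff₀ hρ0]
  nlinarith [hg0 ((a.take k).toFinset)ᶜ, hh0 ((b.drop m).toFinset),
    mul_nonneg hρ0.le (hg0 ((a.take k).toFinset)ᶜ),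
    mul_nonneg hρ0.le (hh0 ((b.drop m).toFinset))]

end IncDec
end

section
/- For every c ∈ [0,1] and every integer n ≥ 2 there exist a finite set E with |E| = n and monotone submodular functions g, h : 2^E → ℝ≥0, each with curvature exactly c, such that for every ordering π = (e_1, …, e_n) of E there exist k ∈ {1, …, n} and S ⊆ E with |S| = k and f(S) ≥ (2(n−1)/((2−c)(n−1)+c))·f(S_k). (As n → ∞, the ratio 2(n−1)/((2−c)(n−1)+c) tends to 1 + c/(2−c).) -/
namespace IncDec

open Finset

variable {α : Type*} [Fintype α] [DecidableEq α]

section LB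

variable {n : ℕ}

/-- Weight function: special element `a` has weight `n-1`, others weight `1`. -/
def wfun (n : ℕ) (a : Fin n) (S : Finset (Fin n)) : ℝ :=
  (S.card : ℝ) + ((n : ℝ) - 2) * (if a ∈ S then 1 else 0)

/-- The hard instance: `(1-c)`·modular + `c`·(modular capped at `n-1`). -/
def Ffun (c : ℝ) (n : ℕ) (a : Fin n) (S : Finset (Fin n)) : ℝ :=
  (1 - c) * wfun n a S + c * min (wfun n a S) ((n : ℝ) - 1)

lemma wfun_nonneg (hn : 2 ≤ n) (a : Fin n) (S : Finset (Fin n)) : 0 ≤ wfun n a S := by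
  have h2 : (2 : ℝ) ≤ (n : ℝ) := by exact_mod_cast hn
  have hc : (0 : ℝ) ≤ (S.card : ℝ) := by positivity
  unfold wfun; split_ifs <;> linarith

lemma wfun_mono (hn : 2 ≤ n) (a : Fin n) {S T : Finset (Fin n)} (hST : S ⊆ T) :
    wfun n a S ≤ wfun n a T := by
  have h2 : (2 : ℝ) ≤ (n : ℝ) := by exact_mod_cast hn
  have hc : (S.card : ℝ) ≤ (T.card : ℝ) := by exact_mod_cast Finset.card_le_card hST
  unfold wfun
  by_cases hS : a ∈ S
  · rw [if_pos hS, if_pos (hST hS)]; linarith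
  · rw [if_neg hS]; split_ifs <;> linarith

lemma wfun_insert (a : Fin n) {x : Fin n} {S : Finset (Fin n)} (hx : x ∉ S) :
    wfun n a (insert x S) = wfun n a S + (if x = a then (n : ℝ) - 1 else 1) := by
  unfold wfun
  rw [Finset.card_insert_of_notMem hx]
  by_cases hxa : x = a
  · subst hxa
    have haS : x ∉ S := hx
    rw [if_pos (Finset.mem_insert_self x S), if_neg haS, if_pos rfl]
    push_cast; ring
  · rw [if_neg hxa]
    have hax : a ≠ x := fun h => hxa h.symm
    have : (if a ∈ insert x S then (1:ℝ) else 0) = (if a ∈ S then (1:ℝ) else 0) := by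
      simp [Finset.mem_insert, hax]
    rw [this]
    push_cast; ring

lemma wfun_of_not_mem {a : Fin n} {S : Finset (Fin n)} (ha : a ∉ S) :
    wfun n a S = (S.card : ℝ) := by
  unfold wfun; rw [if_neg ha]; ring

lemma wfun_of_mem {a : Fin n} {S : Finset (Fin n)} (ha : a ∈ S) :
    wfun n a S = (S.card : ℝ) + (n : ℝ) - 2 := by
  unfold wfun; rw [if_pos ha]; ring

lemma min_diff_anti {t1 t2 u K : ℝ} (h : t1 ≤ t2) (hu : 0 ≤ u) :
    min (t2 + u) K - min t2 K ≤ min (t1 + u) K - min t1 K := by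
  simp only [min_def]; split_ifs <;> linarith

lemma min_diff_nonneg {t u K : ℝ} (hu : 0 ≤ u) : 0 ≤ min (t + u) K - min t K := by
  simp only [min_def]; split_ifs <;> linarith

lemma min_diff_le {t u K : ℝ} (hu : 0 ≤ u) : min (t + u) K - min t K ≤ u := by
  simp only [min_def]; split_ifs <;> linarith

lemma marg_Ffun {c : ℝ} {a x : Fin n} {S : Finset (Fin n)} (hx : x ∉ S) :
    marg (Ffun c n a) x S =
      (1 - c) * (if x = a then (n : ℝ) - 1 else 1) +
        c * (min (wfun n a S + (if x = a then (n : ℝ) - 1 else 1)) ((n : ℝ) - 1)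
              - min (wfun n a S) ((n : ℝ) - 1)) := by
  unfold marg Ffun
  rw [wfun_insert a hx]; ring

lemma wt_ge_one (hn : 2 ≤ n) (x a : Fin n) :
    (1 : ℝ) ≤ (if x = a then (n : ℝ) - 1 else 1) := by
  have h2 : (2 : ℝ) ≤ (n : ℝ) := by exact_mod_cast hn
  split_ifs <;> linarith

lemma Ffun_of_w_eq_top {c : ℝ} {a : Fin n} {S : Finset (Fin n)}
    (h : wfun n a S = (n : ℝ) - 1) : Ffun c n a S = (n : ℝ) - 1 := by
  unfold Ffun; rw [h, min_self]; ring

end LB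

theorem stmt5 (c : ℝ) (hc0 : 0 ≤ c) (hc1 : c ≤ 1) (n : ℕ) (hn : 2 ≤ n) :
    ∃ g h : Finset (Fin n) → ℝ,
      Mono g ∧ Mono h ∧ Nonneg g ∧ Nonneg h ∧ Submodular g ∧ Submodular h ∧
      CurvatureEq g c ∧ CurvatureEq h c ∧
      ∀ π : List (Fin n), π.Nodup → (∀ x : Fin n, x ∈ π) →
        ∃ k : ℕ, 1 ≤ k ∧ k ≤ n ∧ ∃ S : Finset (Fin n), S.card = k ∧
          fObj g h S ≥
            (2 * ((n : ℝ) - 1) / ((2 - c) * ((n : ℝ) - 1) + c)) *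
              fObj g h (π.take k).toFinset := by
  have hn2 : (2 : ℝ) ≤ (n : ℝ) := by exact_mod_cast hn
  have hc1' : (0 : ℝ) ≤ 1 - c := by linarith
  set a : Fin n := ⟨0, by omega⟩ with ha_def
  set b : Fin n := ⟨1, by omega⟩ with hb_def
  have hba : b ≠ a := by
    intro h; have := congrArg Fin.val h; simp [ha_def, hb_def] at this
  set F : Finset (Fin n) → ℝ := Ffun c n a with hF_def
  -- basic facts
  have hmono : Mono F := by
    intro S T hST
    have hw := wfun_mono hn a hST
    have hmin : min (wfun n a S) ((n:ℝ)-1) ≤ min (wfun n a T) ((n:ℝ)-1) :=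
      min_le_min hw le_rfl
    exact add_le_add (mul_le_mul_of_nonneg_left hw hc1') (mul_le_mul_of_nonneg_left hmin hc0)
  have hnonneg : Nonneg F := by
    intro S
    have hw := wfun_nonneg hn a S
    have hmin : (0:ℝ) ≤ min (wfun n a S) ((n:ℝ)-1) := le_min hw (by linarith)
    exact add_nonneg (mul_nonneg hc1' hw) (mul_nonneg hc0 hmin)
  have hsub : Submodular F := by
    intro S T hST e heT
    have heS : e ∉ S := fun h => heT (hST h)
    rw [show F = Ffun c n a from rfl, marg_Ffun heT, marg_Ffun heS]
    have hu : (0:ℝ) ≤ (if e = a then (n:ℝ)-1 else 1) := le_trans one_pos.le (wt_ge_one hn e a)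
    have hanti := min_diff_anti (K := (n:ℝ)-1) (wfun_mono hn a hST) hu
    have := mul_le_mul_of_nonneg_left hanti hc0
    linarith
  -- some evaluations
  have hwa : wfun n a ({a} : Finset (Fin n)) = (n:ℝ) - 1 := by
    rw [wfun_of_mem (Finset.mem_singleton_self a), Finset.card_singleton]
    push_cast; ring
  have hwe : wfun n a (∅ : Finset (Fin n)) = 0 := by
    rw [wfun_of_not_mem (Finset.notMem_empty a), Finset.card_empty]; norm_num
  have hmargb0 : marg F b ∅ = 1 := by
    rw [show F = Ffun c n a from rfl, marg_Ffun (Finset.notMem_empty b), if_neg hba, hwe]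
    rw [zero_add, min_eq_left (by linarith), min_eq_left (by linarith)]
    ring
  have hmargba : marg F b {a} = 1 - c := by
    rw [show F = Ffun c n a from rfl,
      marg_Ffun (by simp [Finset.mem_singleton, hba] : b ∉ ({a} : Finset (Fin n))),
      if_neg hba, hwa]
    rw [min_eq_right (by linarith), min_self]
    ring
  -- curvature exactly c
  have hcurv : CurvatureEq F c := by
    right
    constructor
    · refine ⟨∅, {a}, b, by simp [Finset.mem_singleton, hba], by rw [hmargb0]; norm_num, ?_⟩
      rw [Finset.empty_union, hmargba, hmargb0, div_one]
    · rintro r ⟨A, B, e, heB, hpos, hr⟩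
      have heA : e ∉ A := by
        intro h
        rw [marg, Finset.insert_eq_self.mpr h, sub_self] at hpos
        exact lt_irrefl _ hpos
      have heAB : e ∉ A ∪ B := by simp [heA, heB]
      set u : ℝ := if e = a then (n:ℝ)-1 else 1 with hu_def
      have hu1 : (1:ℝ) ≤ u := wt_ge_one hn e a
      have hmA : marg F e A = (1-c)*u + c*(min (wfun n a A + u) ((n:ℝ)-1) - min (wfun n a A) ((n:ℝ)-1)) :=
        marg_Ffun heA
      have hmAB : marg F e (A ∪ B) = (1-c)*u + c*(min (wfun n a (A ∪ B) + u) ((n:ℝ)-1) - min (wfun n a (A ∪ B)) ((n:ℝ)-1)) :=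
        marg_Ffun heAB
      have hdA : min (wfun n a A + u) ((n:ℝ)-1) - min (wfun n a A) ((n:ℝ)-1) ≤ u :=
        min_diff_le (by linarith)
      have hdAB : (0:ℝ) ≤ min (wfun n a (A ∪ B) + u) ((n:ℝ)-1) - min (wfun n a (A ∪ B)) ((n:ℝ)-1) :=
        min_diff_nonneg (by linarith)
      have hAle : marg F e A ≤ u := by
        rw [hmA]; nlinarith
      have hABge : (1-c)*u ≤ marg F e (A ∪ B) := by
        rw [hmAB]; nlinarith
      rw [hr, le_div_iff₀ hpos]
      calc (1-c) * marg F e A ≤ (1-c) * u := mul_le_mul_of_nonneg_left hAle hc1'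
        _ ≤ marg F e (A ∪ B) := hABge
  refine ⟨F, F, hmono, hmono, hnonneg, hnonneg, hsub, hsub, hcurv, hcurv, ?_⟩
  -- the ordering part
  intro π hnd hcomp
  have hπfin : π.toFinset = Finset.univ := by
    ext x; simp [hcomp x]
  have hπlen : π.length = n := by
    have h1 : π.toFinset.card = π.length := List.toFinset_card_of_nodup hnd
    rw [hπfin, Finset.card_univ, Fintype.card_fin] at h1
    omega
  have htake : ∀ k, k ≤ n → (π.take k).toFinset.card = k := by
    intro k hk
    rw [List.toFinset_card_of_nodup (hnd.sublist (List.take_sublist _ _)),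
      List.length_take, hπlen]
    omega
  -- values of F on the relevant sets
  have hFa : F {a} = (n:ℝ) - 1 := Ffun_of_w_eq_top hwa
  have hFac : F ({a}ᶜ) = (n:ℝ) - 1 := by
    refine Ffun_of_w_eq_top ?_
    rw [wfun_of_not_mem (by simp : a ∉ ({a}ᶜ : Finset (Fin n))), Finset.card_compl,
      Finset.card_singleton, Fintype.card_fin, Nat.cast_sub (by omega)]
    norm_num
  have hfObj_top : fObj F F {a} = 2 * ((n:ℝ) - 1) := by
    rw [fObj, hFa, hFac]; ring
  have hfObj_top' : fObj F F ({a}ᶜ) = 2 * ((n:ℝ) - 1) := by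
    rw [fObj, hFac, compl_compl, hFa]; ring
  -- value of F on a one-element set not containing a
  have hFone : ∀ S : Finset (Fin n), S.card = 1 → a ∉ S → F S = 1 := by
    intro S hcard haS
    rw [show F = Ffun c n a from rfl, Ffun, wfun_of_not_mem haS, hcard]
    rw [min_eq_left (by push_cast; linarith)]
    push_cast; ring
  -- value of F on an (n-1)-element set containing a
  have hFbig : ∀ S : Finset (Fin n), S.card = n - 1 → a ∈ S →
      F S = (1-c) * (2*(n:ℝ) - 3) + c * ((n:ℝ) - 1) := by
    intro S hcard haS
    have hw : wfun n a S = 2*(n:ℝ) - 3 := by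
      rw [wfun_of_mem haS, hcard, Nat.cast_sub (by omega)]
      push_cast; ring
    rw [show F = Ffun c n a from rfl, Ffun, hw, min_eq_right (by linarith)]
  have hD : (0:ℝ) < (2 - c) * ((n:ℝ) - 1) + c := by nlinarith
  have hkey : ∀ T : Finset (Fin n), fObj F F T = (2 - c) * ((n:ℝ) - 1) + c →
      2 * ((n:ℝ) - 1) ≥ 2 * ((n : ℝ) - 1) / ((2 - c) * ((n : ℝ) - 1) + c) * fObj F F T := by
    intro T hT
    rw [hT, div_mul_cancel₀ _ (ne_of_gt hD)]
  by_cases hmem : a ∈ (π.take 1).toFinset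
  · -- a is first: take k = n-1, S = {a}ᶜ
    refine ⟨n - 1, by omega, by omega, {a}ᶜ, ?_, ?_⟩
    · rw [Finset.card_compl, Finset.card_singleton, Fintype.card_fin]
    · rw [hfObj_top']
      apply hkey
      have hcard : (π.take (n-1)).toFinset.card = n - 1 := htake (n-1) (by omega)
      have hamem : a ∈ (π.take (n-1)).toFinset := by
        rw [List.mem_toFinset] at hmem ⊢
        have h1 : π.take 1 = (π.take (n-1)).take 1 := by
          rw [List.take_take]; congr 1; omega
        exact List.take_subset _ _ (h1 ▸ hmem)
      have hccard : ((π.take (n-1)).toFinset)ᶜ.card = 1 := by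
        rw [Finset.card_compl, Fintype.card_fin, hcard]; omega
      have hanotc : a ∉ ((π.take (n-1)).toFinset)ᶜ := by
        simp [Finset.mem_compl, hamem]
      rw [fObj, hFbig _ hcard hamem, hFone _ hccard hanotc]
      ring
  · -- a is not first: take k = 1, S = {a}
    refine ⟨1, le_refl 1, by omega, {a}, Finset.card_singleton a, ?_⟩
    rw [hfObj_top]
    apply hkey
    have hcard : (π.take 1).toFinset.card = 1 := htake 1 (by omega)
    have hccard : ((π.take 1).toFinset)ᶜ.card = n - 1 := by
      rw [Finset.card_compl, Fintype.card_fin, hcard]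
    have hamemc : a ∈ ((π.take 1).toFinset)ᶜ := Finset.mem_compl.mpr hmem
    rw [fObj, hFone _ hcard hmem, hFbig _ hccard hamemc]
    ring

end IncDec
end

section
/- There exist a finite set E with |E| = 3 and monotone gross substitute functions g, h : 2^E → ℝ≥0 such that for every ordering π = (e_1, e_2, e_3) of E there exist k ∈ {1, 2, 3} and S ⊆ E with |S| = k and f(S) ≥ (5/4)·f(S_k). -/
namespace IncDec

open Finset

variable {α : Type*} [Fintype α] [DecidableEq α]

/-- Integer table for `g`. -/
def giW (S : Finset (Fin 3)) : ℤ :=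
  if S = ∅ then 0 else if S = {0} then 2 else if S = {1} then 1 else if S = {2} then 2
  else if S = {0,1} then 3 else if S = {0,2} then 2 else if S = {1,2} then 3 else 3

/-- Integer table for `h`. -/
def hiW (S : Finset (Fin 3)) : ℤ :=
  if S = ∅ then 0 else if S = {0} then 2 else if S = {1} then 2 else if S = {2} then 1
  else if S = {0,1} then 2 else if S = {0,2} then 3 else if S = {1,2} then 3 else 3

def prefW (a b c : Fin 3) (k : ℕ) : Finset (Fin 3) :=
  if k = 1 then {a} else if k = 2 then {a, b} else {a, b, c}

lemma giW_mono : ∀ ⦃S T : Finset (Fin 3)⦄, S ⊆ T → giW S ≤ giW T := by decide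
lemma hiW_mono : ∀ ⦃S T : Finset (Fin 3)⦄, S ⊆ T → hiW S ≤ hiW T := by decide
lemma giW_nonneg : ∀ S : Finset (Fin 3), 0 ≤ giW S := by decide
lemma hiW_nonneg : ∀ S : Finset (Fin 3), 0 ≤ hiW S := by decide
lemma giW_submod : ∀ ⦃S T : Finset (Fin 3)⦄, S ⊆ T → ∀ e, e ∉ T →
    giW (insert e T) - giW T ≤ giW (insert e S) - giW S := by decide
lemma hiW_submod : ∀ ⦃S T : Finset (Fin 3)⦄, S ⊆ T → ∀ e, e ∉ T →
    hiW (insert e T) - hiW T ≤ hiW (insert e S) - hiW S := by decide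
lemma giW_gs : ∀ A B : Finset (Fin 3), Disjoint A B → 2 ≤ B.card → ∀ b ∈ B,
    ∃ b' ∈ B.erase b,
      (giW (insert b A) - giW A) + (giW (B.erase b ∪ A) - giW A) ≤
        (giW (insert b' A) - giW A) + (giW (B.erase b' ∪ A) - giW A) := by decide
lemma hiW_gs : ∀ A B : Finset (Fin 3), Disjoint A B → 2 ≤ B.card → ∀ b ∈ B,
    ∃ b' ∈ B.erase b,
      (hiW (insert b A) - hiW A) + (hiW (B.erase b ∪ A) - hiW A) ≤
        (hiW (insert b' A) - hiW A) + (hiW (B.erase b' ∪ A) - hiW A) := by decide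
lemma key_order : ∀ a b c : Fin 3, a ≠ b → a ≠ c → b ≠ c →
    ∃ k : Fin 3, ∃ S : Finset (Fin 3), S.card = k.val + 1 ∧
      5 * (hiW (prefW a b c (k.val + 1)) + giW ((prefW a b c (k.val + 1))ᶜ)) ≤
        4 * (hiW S + giW Sᶜ) := by decide

theorem stmt7 :
    ∃ g h : Finset (Fin 3) → ℝ,
      Mono g ∧ Mono h ∧ Nonneg g ∧ Nonneg h ∧
      GrossSubstitute g ∧ GrossSubstitute h ∧
      ∀ π : List (Fin 3), π.Nodup → (∀ x : Fin 3, x ∈ π) →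
        ∃ k : ℕ, 1 ≤ k ∧ k ≤ 3 ∧ ∃ S : Finset (Fin 3), S.card = k ∧
          fObj g h S ≥ (5 / 4 : ℝ) * fObj g h (π.take k).toFinset := by
  refine ⟨fun S => (giW S : ℝ), fun S => (hiW S : ℝ), ?_, ?_, ?_, ?_, ?_, ?_, ?_⟩
  · intro S T hST; dsimp only; exact_mod_cast giW_mono hST
  · intro S T hST; dsimp only; exact_mod_cast hiW_mono hST
  · intro S; dsimp only; exact_mod_cast giW_nonneg S
  · intro S; dsimp only; exact_mod_cast hiW_nonneg S
  · constructor
    · intro S T hST e he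
      simp only [marg]
      exact_mod_cast giW_submod hST e he
    · intro A B hd hc b hb
      obtain ⟨b', hb', hle⟩ := giW_gs A B hd hc b hb
      exact ⟨b', hb', by simp only [marg, margSet]; exact_mod_cast hle⟩
  · constructor
    · intro S T hST e he
      simp only [marg]
      exact_mod_cast hiW_submod hST e he
    · intro A B hd hc b hb
      obtain ⟨b', hb', hle⟩ := hiW_gs A B hd hc b hb
      exact ⟨b', hb', by simp only [marg, margSet]; exact_mod_cast hle⟩
  · intro π hnd hall
    have hlen : π.length = 3 := by
      have h1 : π.toFinset = (Finset.univ : Finset (Fin 3)) := by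
        ext x; simp [hall x]
      have h2 := List.toFinset_card_of_nodup hnd
      rw [h1] at h2
      simpa using h2.symm
    obtain ⟨a, b, c, rfl⟩ : ∃ a b c, π = [a, b, c] := by
      rcases π with _ | ⟨a, _ | ⟨b, _ | ⟨c, _ | ⟨d, t⟩⟩⟩⟩ <;> simp_all
    have hab : a ≠ b := by simp_all
    have hac : a ≠ c := by simp_all
    have hbc : b ≠ c := by simp_all
    obtain ⟨k, S, hcard, hle⟩ := key_order a b c hab hac hbc
    refine ⟨k.val + 1, by omega, by omega, S, hcard, ?_⟩
    have hpref : ([a, b, c].take (k.val + 1)).toFinset = prefW a b c (k.val + 1) := by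
      fin_cases k <;> simp [prefW, List.take]
    rw [hpref]
    have : ((5 * (hiW (prefW a b c (k.val + 1)) + giW ((prefW a b c (k.val + 1))ᶜ)) : ℤ) : ℝ) ≤
        ((4 * (hiW S + giW Sᶜ) : ℤ) : ℝ) := Int.cast_le.mpr hle
    simp only [fObj]
    push_cast at this
    linarith

end IncDec
end

section
/- Let g, h : 2^E → ℝ≥0 be monotone with g(∅) = h(∅) = 0, and consider any double-greedy run for g and h. Then for every k ∈ {0, 1, …, n}, f(H_k) ≥ Σ_{i=1}^{k} φ_i. -/
namespace IncDec

open Finset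

variable {α : Type*} [Fintype α] [DecidableEq α]

theorem stmt8 (g h : Finset α → ℝ)
    (hgm : Mono g) (hhm : Mono h) (hg0 : Nonneg g) (hh0 : Nonneg h)
    (hge : g ∅ = 0) (hhe : h ∅ = 0) (R : DGRun α g h) :
    ∀ k ≤ Fintype.card α, fObj g h (R.H k) ≥ ∑ i ∈ Finset.range k, phi R i := by
  have key : ∀ k ≤ Fintype.card α, Disjoint (R.H k) (R.G k) ∧
      h (R.H k) + g (R.G k) = ∑ i ∈ Finset.range k, phi R i := by
    intro k
    induction k with
    | zero => intro _; simp [R.H0, R.G0, hge, hhe]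
    | succ k ih =>
      intro hk
      have hk' : k < Fintype.card α := hk
      obtain ⟨hdisj, heq⟩ := ih (le_of_lt hk')
      have hmem := R.mem k hk'
      have hH : R.elt k ∉ R.H k := fun h' => hmem (Finset.mem_union_left _ h')
      have hG : R.elt k ∉ R.G k := fun h' => hmem (Finset.mem_union_right _ h')
      rcases R.step k hk' with ⟨h1, h2, h3⟩ | ⟨h1, h2, h3⟩
      · constructor
        · rw [h1, h2]
          exact Finset.disjoint_insert_left.mpr ⟨hG, hdisj⟩
        · rw [Finset.sum_range_succ, h1, h2, ← heq]
          have hphi : phi R k = marg h (R.elt k) (R.H k) := max_eq_right h3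
          rw [hphi]; unfold marg; ring
      · constructor
        · rw [h1, h2]
          exact Finset.disjoint_insert_right.mpr ⟨hH, hdisj⟩
        · rw [Finset.sum_range_succ, h1, h2, ← heq]
          have hphi : phi R k = marg g (R.elt k) (R.G k) := max_eq_left h3
          rw [hphi]; unfold marg; ring
  intro k hk
  obtain ⟨hdisj, heq⟩ := key k hk
  have hsub : R.G k ⊆ (R.H k)ᶜ := by
    intro x hx
    simp only [Finset.mem_compl]
    exact fun hx' => (Finset.disjoint_left.mp hdisj hx') hx
  have hmono := hgm hsub
  unfold fObj
  linarith

end IncDec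
end
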